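/- Let N ≥ 2 and β > 0, and define W_β on the open Weyl chamber 𝒲^N by W_β(x) := ‖x‖²/4 − (β/(2(N−1))) ∑_{1≤k<ℓ≤N} log(x^ℓ − x^k). Then there exists a constant M′ ∈ ℝ (depending on N and β) such that for all x ∈ 𝒲^N: W_β(x) ≥ −M′, and moreover W_β(x) + (β/(4(N−1))) log(x^ℓ − x^k) ≥ −M′ for every pair of indices 1 ≤ k < ℓ ≤ N. -/
import Mathlib


open Finset

/-- The Lyapunov-type lower bound \eqref{lyapunovinequality} from the proof of the closed
loop Verification Theorem: there is a constant `M′` (depending on `N, β`) such that on the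
Weyl chamber `W_β(x) ≥ −M′` and `W_β(x) + (β/(4(N−1))) log(x^ℓ − x^k) ≥ −M′` for all
`k < ℓ`. -/
theorem dyson_potential_lyapunov_bound (N : ℕ) (hN : 2 ≤ N) (β : ℝ) (hβ : 0 < β)
    (Wset : Set (Fin N → ℝ)) (hWset : Wset = {x | StrictMono x})
    (Wβ : (Fin N → ℝ) → ℝ)
    (hWβ : ∀ x, Wβ x = (∑ i, (x i) ^ 2) / 4
      - β / (2 * ((N : ℝ) - 1)) *
          ∑ p ∈ univ.filter (fun p : Fin N × Fin N => p.1 < p.2), Real.log (x p.2 - x p.1)) :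
    ∃ M' : ℝ, ∀ x ∈ Wset,
      -M' ≤ Wβ x ∧
      ∀ k l : Fin N, k < l →
        -M' ≤ Wβ x + β / (4 * ((N : ℝ) - 1)) * Real.log (x l - x k) := by
  have hN1 : (1:ℝ) ≤ (N:ℝ) - 1 := by
    have : (2:ℝ) ≤ (N:ℝ) := by exact_mod_cast hN
    linarith
  set c : ℝ := β / (2 * ((N : ℝ) - 1)) with hc
  have hcpos : 0 < c := div_pos hβ (by linarith)
  set Pset := univ.filter (fun p : Fin N × Fin N => p.1 < p.2) with hPset
  set P : ℕ := Pset.card with hP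
  set A : ℝ := 2 * c * P with hA
  have hA0 : 0 ≤ A := by positivity
  have hc' : β / (4 * ((N : ℝ) - 1)) = c / 2 := by
    rw [hc, div_div]; congr 1; ring
  refine ⟨(A + c)^2, fun x hx => ?_⟩
  have hmono : StrictMono x := by rw [hWset] at hx; exact hx
  set S : ℝ := ∑ i, (x i)^2 with hS
  have hS0 : 0 ≤ S := Finset.sum_nonneg fun i _ => sq_nonneg _
  set t : ℝ := Real.sqrt S with ht
  have ht0 : 0 ≤ t := Real.sqrt_nonneg _
  have ht2 : t^2 = S := Real.sq_sqrt hS0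
  have habs : ∀ i : Fin N, |x i| ≤ t := by
    intro i
    rw [ht, ← Real.sqrt_sq_eq_abs]
    apply Real.sqrt_le_sqrt
    exact Finset.single_le_sum (f := fun i => (x i)^2) (fun j _ => sq_nonneg _) (mem_univ i)
  have hlog : ∀ p : Fin N × Fin N, p.1 < p.2 → Real.log (x p.2 - x p.1) ≤ 2 * t := by
    intro p hp
    have h1 : 0 < x p.2 - x p.1 := sub_pos.mpr (hmono hp)
    have h2 := Real.log_le_sub_one_of_pos h1
    have ha := abs_le.mp (habs p.1)
    have hb := abs_le.mp (habs p.2)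
    linarith [ha.1, hb.2]
  have hsum : ∀ s : Finset (Fin N × Fin N), s ⊆ Pset →
      ∑ p ∈ s, Real.log (x p.2 - x p.1) ≤ (s.card : ℝ) * (2 * t) := by
    intro s hs
    calc ∑ p ∈ s, Real.log (x p.2 - x p.1) ≤ s.card • (2*t) := by
          apply Finset.sum_le_card_nsmul
          intro p hp
          exact hlog p (by simpa [hPset] using (Finset.mem_filter.mp (hs hp)).2)
      _ = (s.card : ℝ) * (2*t) := by simp [nsmul_eq_mul]
  have hWx : Wβ x = S / 4 - c * ∑ p ∈ Pset, Real.log (x p.2 - x p.1) := hWβ x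
  have hSig : ∑ p ∈ Pset, Real.log (x p.2 - x p.1) ≤ (P : ℝ) * (2 * t) :=
    hsum Pset (subset_refl _)
  constructor
  · -- first inequality
    rw [hWx]
    have h1 : c * ∑ p ∈ Pset, Real.log (x p.2 - x p.1) ≤ A * t := by
      calc c * ∑ p ∈ Pset, Real.log (x p.2 - x p.1) ≤ c * ((P : ℝ) * (2 * t)) := by
            exact mul_le_mul_of_nonneg_left hSig hcpos.le
        _ = A * t := by rw [hA]; ring
    nlinarith [sq_nonneg (t/2 - (A + c)), sq_nonneg (t/2 - A)]
  · intro k l hkl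
    rw [hWx, hc']
    set g := Real.log (x l - x k) with hg
    have hmem : (k, l) ∈ Pset := by
      simp [hPset, hkl]
    have hsplit : g + ∑ p ∈ Pset.erase (k, l), Real.log (x p.2 - x p.1)
        = ∑ p ∈ Pset, Real.log (x p.2 - x p.1) :=
      Finset.add_sum_erase _ (fun p => Real.log (x p.2 - x p.1)) hmem
    have hrest : ∑ p ∈ Pset.erase (k, l), Real.log (x p.2 - x p.1)
        ≤ ((Pset.erase (k, l)).card : ℝ) * (2 * t) :=
      hsum _ (Finset.erase_subset _ _)
    have hcard : ((Pset.erase (k, l)).card : ℝ) ≤ (P : ℝ) := by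
      exact_mod_cast Finset.card_erase_le
    have hrest' : ∑ p ∈ Pset.erase (k, l), Real.log (x p.2 - x p.1) ≤ (P : ℝ) * (2 * t) := by
      have h2t : 0 ≤ 2 * t := by linarith
      calc ∑ p ∈ Pset.erase (k, l), Real.log (x p.2 - x p.1)
          ≤ ((Pset.erase (k, l)).card : ℝ) * (2 * t) := hrest
        _ ≤ (P : ℝ) * (2 * t) := mul_le_mul_of_nonneg_right hcard h2t
    have hglog : g ≤ 2 * t := hlog (k, l) hkl
    -- Wβ x + (c/2) g = S/4 - (c/2) g - c * Σ_rest
    have key : S / 4 - c * ∑ p ∈ Pset, Real.log (x p.2 - x p.1) + c / 2 * g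
        = S / 4 - c / 2 * g - c * ∑ p ∈ Pset.erase (k, l), Real.log (x p.2 - x p.1) := by
      rw [← hsplit]; ring
    rw [key]
    have h3 : c / 2 * g ≤ c * t := by nlinarith
    have h4 : c * ∑ p ∈ Pset.erase (k, l), Real.log (x p.2 - x p.1) ≤ A * t := by
      calc c * ∑ p ∈ Pset.erase (k, l), Real.log (x p.2 - x p.1)
          ≤ c * ((P : ℝ) * (2 * t)) := mul_le_mul_of_nonneg_left hrest' hcpos.le
        _ = A * t := by rw [hA]; ring
    nlinarith [sq_nonneg (t/2 - (A + c))]
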